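/- Let A_ρ ⊆ M_n be a structural matrix algebra and let φ : A_ρ → M_n be an injective Jordan homomorphism. Then there exist an invertible matrix S ∈ M_n, an idempotent P belonging to the center of A_ρ, and a transitive map g : ρ → ℂ∖{0} such that φ(X) = S (P g*(X) + (I − P) g*(X)ᵗ) S⁻¹ for all X ∈ A_ρ, where g* is the algebra automorphism of A_ρ induced by g. -/

import Mathlib

open Matrix Relation

namespace SMA2aux

open scoped Classical

variable {n : ℕ}

abbrev Mat (n : ℕ) := Matrix (Fin n) (Fin n) ℂ

def Eb (i j : Fin n) : Mat n := Matrix.single i j 1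

def cc (ψ : Mat n → Mat n) (i j : Fin n) : ℂ := ψ (Eb i j) i j
def dd (ψ : Mat n → Mat n) (i j : Fin n) : ℂ := ψ (Eb i j) j i

def sg (ρ : Fin n → Fin n → Prop) (a b : Fin n) : Prop := ρ a b ∨ ρ b a

def mlt (ρ : Fin n → Fin n → Prop) (ψ : Mat n → Mat n) (i : Fin n) : Prop :=
  ∀ a b, ρ a b → a ≠ b → ReflTransGen (sg ρ) i a → cc ψ a b ≠ 0

noncomputable def gg (ρ : Fin n → Fin n → Prop) (ψ : Mat n → Mat n) (i j : Fin n) : ℂ :=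
  if i = j then 1 else if mlt ρ ψ i then cc ψ i j else dd ψ i j

noncomputable def PP (ρ : Fin n → Fin n → Prop) (ψ : Mat n → Mat n) : Mat n :=
  diagonal (fun i => if mlt ρ ψ i then (1:ℂ) else 0)

section Alemmas

variable {ρ : Fin n → Fin n → Prop} {A : Set (Mat n)}
variable (hrefl : ∀ i, ρ i i) (htrans : ∀ i j k, ρ i j → ρ j k → ρ i k)
variable (hA : A = {X : Mat n | ∀ i j, ¬ ρ i j → X i j = 0})

include hA in
theorem memA {i j : Fin n} (h : ρ i j) : Eb i j ∈ A := by
  subst hA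
  intro a b hab
  by_cases h1 : i = a ∧ j = b
  · exact absurd (h1.1 ▸ h1.2 ▸ h) hab
  · exact Matrix.single_apply_of_ne _ _ _ _ _ h1

include hA in
theorem zeroA : (0 : Mat n) ∈ A := by subst hA; intro a b _; rfl

include hA in
theorem addA {X Y : Mat n} (hX : X ∈ A) (hY : Y ∈ A) : X + Y ∈ A := by
  subst hA
  intro a b hab
  simp [Matrix.add_apply, hX a b hab, hY a b hab]

include hA in
theorem smulA {α : ℂ} {X : Mat n} (hX : X ∈ A) : α • X ∈ A := by
  subst hA
  intro a b hab
  simp [Matrix.smul_apply, hX a b hab]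

include htrans hA in
theorem mulA {X Y : Mat n} (hX : X ∈ A) (hY : Y ∈ A) : X * Y ∈ A := by
  subst hA
  intro a b hab
  rw [Matrix.mul_apply]
  apply Finset.sum_eq_zero
  intro k _
  by_cases h1 : ρ a k
  · by_cases h2 : ρ k b
    · exact absurd (htrans a k b h1 h2) hab
    · rw [hY k b h2, mul_zero]
  · rw [hX a k h1, zero_mul]

end Alemmas

section PsiLemmas

variable {ρ : Fin n → Fin n → Prop} {A : Set (Mat n)} {ψ : Mat n → Mat n}
variable (hrefl : ∀ i, ρ i i) (htrans : ∀ i j k, ρ i j → ρ j k → ρ i k)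
variable (hA : A = {X : Mat n | ∀ i j, ¬ ρ i j → X i j = 0})
variable (hinj : Set.InjOn ψ A)
variable (hadd : ∀ X ∈ A, ∀ Y ∈ A, ψ (X + Y) = ψ X + ψ Y)
variable (hsmul : ∀ (α : ℂ), ∀ X ∈ A, ψ (α • X) = α • ψ X)
variable (hjordan : ∀ X ∈ A, ψ (X * X) = ψ X * ψ X)

include hA hsmul in
theorem psi0 : ψ 0 = 0 := by
  have := hsmul 0 0 (zeroA hA)
  simpa using this

include hA hsmul hinj in
theorem psiInj0 {X : Mat n} (hX : X ∈ A) (h : ψ X = 0) : X = 0 :=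
  hinj hX (zeroA hA) (h.trans (psi0 hA hsmul).symm)

include htrans hA hadd hjordan in
theorem hpol : ∀ X ∈ A, ∀ Y ∈ A, ψ (X * Y + Y * X) = ψ X * ψ Y + ψ Y * ψ X := by
  intro X hX Y hY
  have h1 := hjordan (X + Y) (addA hA hX hY)
  have e1 : (X + Y) * (X + Y) = (X * X + Y * Y) + (X * Y + Y * X) := by noncomm_ring
  rw [e1, hadd _ (addA hA (mulA htrans hA hX hX) (mulA htrans hA hY hY))
      _ (addA hA (mulA htrans hA hX hY) (mulA htrans hA hY hX)),
    hadd _ (mulA htrans hA hX hX) _ (mulA htrans hA hY hY),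
    hjordan X hX, hjordan Y hY, hadd X hX Y hY] at h1
  have e2 : (ψ X + ψ Y) * (ψ X + ψ Y) = (ψ X * ψ X + ψ Y * ψ Y) + (ψ X * ψ Y + ψ Y * ψ X) := by
    noncomm_ring
  rw [e2] at h1
  exact add_left_cancel h1

theorem EbMul (i j k l : Fin n) :
    (Eb i j * Eb k l : Mat n) = if j = k then Eb i l else 0 := by
  by_cases h : j = k
  · subst h; simp [Eb, Matrix.single_mul_single_same]
  · rw [if_neg h]
    exact Matrix.single_mul_single_of_ne _ _ _ _ h _

variable (hdiag : ∀ i, ψ (Eb i i) = Eb i i)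

include hrefl htrans hA hadd hsmul hjordan hdiag in
theorem peirce {i j : Fin n} (hij : ρ i j) (hne : i ≠ j) :
    ψ (Eb i j) = cc ψ i j • Eb i j + dd ψ i j • Eb j i := by
  have hk : ∀ k : Fin n, Eb k k * ψ (Eb i j) + ψ (Eb i j) * Eb k k
      = (((if k = i then (1:ℂ) else 0) + (if k = j then 1 else 0))) • ψ (Eb i j) := by
    intro k
    have h := hpol htrans hA hadd hjordan (Eb k k) (memA hA (hrefl k)) (Eb i j) (memA hA hij)
    have e : Eb k k * Eb i j + Eb i j * Eb k k
        = (((if k = i then (1:ℂ) else 0) + (if k = j then 1 else 0))) • Eb i j := by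
      by_cases h1 : k = i
      · subst h1
        simp [EbMul, hne, Ne.symm hne]
      · by_cases h2 : k = j
        · subst h2
          simp [EbMul, h1]
        · simp [EbMul, h1, h2, Ne.symm h2]
    rw [e, hsmul _ _ (memA hA hij), hdiag k] at h
    exact h.symm
  have lem_row : ∀ a b : Fin n, ¬ a = i → ¬ a = j → ¬ a = b → ψ (Eb i j) a b = 0 := by
    intro a b hai haj hab
    have h0 := hk a
    rw [if_neg hai, if_neg haj, add_zero, zero_smul] at h0
    have h' : (Eb a a * ψ (Eb i j) + ψ (Eb i j) * Eb a a) a b = (0 : Mat n) a b := by rw [h0]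
    simpa [Eb, Matrix.add_apply, Matrix.mul_single_apply_of_ne _ _ _ _ _
      (fun h => hab h.symm)] using h'
  have lem_col : ∀ a b : Fin n, ¬ b = i → ¬ b = j → ¬ a = b → ψ (Eb i j) a b = 0 := by
    intro a b hbi hbj hab
    have h0 := hk b
    rw [if_neg hbi, if_neg hbj, add_zero, zero_smul] at h0
    have h' : (Eb b b * ψ (Eb i j) + ψ (Eb i j) * Eb b b) a b = (0 : Mat n) a b := by rw [h0]
    simpa [Eb, Matrix.add_apply, Matrix.single_mul_apply_of_ne _ _ _ _ _ hab] using h'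
  have lem_diag_out : ∀ a : Fin n, ¬ a = i → ¬ a = j → ψ (Eb i j) a a = 0 := by
    intro a hai haj
    have h0 := hk a
    rw [if_neg hai, if_neg haj, add_zero, zero_smul] at h0
    have h' : (Eb a a * ψ (Eb i j) + ψ (Eb i j) * Eb a a) a a = (0 : Mat n) a a := by rw [h0]
    simp only [Eb, Matrix.add_apply, Matrix.single_mul_apply_same,
      Matrix.mul_single_apply_same, one_mul, mul_one, Matrix.zero_apply] at h'
    simp only [Eb]
    linear_combination h' / 2
  have lem_diag_i : ψ (Eb i j) i i = 0 := by
    have h0 := hk i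
    rw [if_pos rfl, if_neg hne, add_zero, one_smul] at h0
    have h' : (Eb i i * ψ (Eb i j) + ψ (Eb i j) * Eb i i) i i = ψ (Eb i j) i i := by rw [h0]
    simp only [Eb, Matrix.add_apply, Matrix.single_mul_apply_same,
      Matrix.mul_single_apply_same, one_mul, mul_one] at h'
    simp only [Eb]
    linear_combination h'
  have lem_diag_j : ψ (Eb i j) j j = 0 := by
    have h0 := hk j
    rw [if_neg (Ne.symm hne), if_pos rfl, zero_add, one_smul] at h0
    have h' : (Eb j j * ψ (Eb i j) + ψ (Eb i j) * Eb j j) j j = ψ (Eb i j) j j := by rw [h0]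
    simp only [Eb, Matrix.add_apply, Matrix.single_mul_apply_same,
      Matrix.mul_single_apply_same, one_mul, mul_one] at h'
    simp only [Eb]
    linear_combination h'
  have hzero : ∀ a b : Fin n, ¬(a = i ∧ b = j) → ¬(a = j ∧ b = i) → ψ (Eb i j) a b = 0 := by
    intro a b h1 h2
    by_cases hab : a = b
    · subst hab
      by_cases hai : a = i
      · rw [hai]; exact lem_diag_i
      · by_cases haj : a = j
        · rw [haj]; exact lem_diag_j
        · exact lem_diag_out a hai haj
    · by_cases hai : a = i
      · have hbj : ¬ b = j := fun h => h1 ⟨hai, h⟩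
        have hbi : ¬ b = i := fun h => hab (hai.trans h.symm)
        exact lem_col a b hbi hbj hab
      · by_cases haj : a = j
        · have hbi : ¬ b = i := fun h => h2 ⟨haj, h⟩
          have hbj : ¬ b = j := fun h => hab (haj.trans h.symm)
          exact lem_col a b hbi hbj hab
        · exact lem_row a b hai haj hab
  ext a b
  by_cases h1 : a = i ∧ b = j
  · obtain ⟨rfl, rfl⟩ := h1
    simp [cc, dd, Eb, Matrix.add_apply, Matrix.smul_apply, hne, Ne.symm hne]
  · by_cases h2 : a = j ∧ b = i
    · obtain ⟨rfl, rfl⟩ := h2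
      simp [cc, dd, Eb, Matrix.add_apply, Matrix.smul_apply, hne, Ne.symm hne]
    · rw [hzero a b h1 h2]
      have e1 : (Eb i j : Mat n) a b = 0 := by
        simp only [Eb]; exact Matrix.single_apply_of_ne _ _ _ _ _ (by tauto)
      have e2 : (Eb j i : Mat n) a b = 0 := by
        simp only [Eb]; exact Matrix.single_apply_of_ne _ _ _ _ _ (by tauto)
      simp [Matrix.add_apply, Matrix.smul_apply, e1, e2]

include hrefl htrans hA hadd hsmul hjordan hdiag in
theorem cd0 {i j : Fin n} (hij : ρ i j) (hne : i ≠ j) : cc ψ i j * dd ψ i j = 0 := by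
  have h := hjordan (Eb i j) (memA hA hij)
  rw [peirce hrefl htrans hA hadd hsmul hjordan hdiag hij hne] at h
  have e : (Eb i j : Mat n) * Eb i j = 0 := by rw [EbMul, if_neg (Ne.symm hne)]
  rw [e, psi0 hA hsmul] at h
  simp only [add_mul, mul_add, smul_mul_assoc, mul_smul_comm, smul_smul, EbMul,
    if_neg (Ne.symm hne), if_neg hne, if_pos rfl, smul_zero, add_zero, zero_add] at h
  have h2 := Matrix.ext_iff.mpr h i i
  simp [Eb, Matrix.add_apply, Matrix.smul_apply, Ne.symm hne] at h2
  first
      | linear_combination h2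
      | linear_combination -h2
      | (rcases h2 with hz|hz <;> simp [hz])

include hrefl htrans hA hinj hadd hsmul hjordan hdiag in
theorem cdne {i j : Fin n} (hij : ρ i j) (hne : i ≠ j) (hc : cc ψ i j = 0) : dd ψ i j ≠ 0 := by
  intro hd
  have h := peirce hrefl htrans hA hadd hsmul hjordan hdiag hij hne
  rw [hc, hd, zero_smul, zero_smul, add_zero] at h
  have := psiInj0 hA hinj hsmul (memA hA hij) h
  have h2 := Matrix.ext_iff.mpr this i j
  simp [Eb] at h2

include hrefl htrans hA hadd hsmul hjordan hdiag in
theorem chain {i j k : Fin n} (hij : ρ i j) (hjk : ρ j k) (h1 : i ≠ j) (h2 : j ≠ k)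
    (h3 : i ≠ k) :
    cc ψ i k = cc ψ i j * cc ψ j k ∧ dd ψ i k = dd ψ i j * dd ψ j k := by
  have h := hpol htrans hA hadd hjordan (Eb i j) (memA hA hij) (Eb j k) (memA hA hjk)
  have e : (Eb i j : Mat n) * Eb j k + Eb j k * Eb i j = Eb i k := by
    rw [EbMul, EbMul, if_pos rfl, if_neg (fun hh => h3 hh.symm), add_zero]
  rw [e, peirce hrefl htrans hA hadd hsmul hjordan hdiag (htrans _ _ _ hij hjk) h3,
    peirce hrefl htrans hA hadd hsmul hjordan hdiag hij h1,
    peirce hrefl htrans hA hadd hsmul hjordan hdiag hjk h2] at h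
  simp only [add_mul, mul_add, smul_mul_assoc, mul_smul_comm, smul_smul, EbMul,
    if_pos rfl, if_neg h1, if_neg h2, if_neg h3, if_neg (Ne.symm h1), if_neg (Ne.symm h2),
    if_neg (Ne.symm h3), smul_zero, add_zero, zero_add] at h
  constructor
  · have h4 := Matrix.ext_iff.mpr h i k
    simp [Eb, Matrix.add_apply, Matrix.smul_apply, h3, Ne.symm h3] at h4
    first
        | linear_combination h4
        | linear_combination -h4
        | (rcases h4 with hz|hz <;> simp [hz])
  · have h4 := Matrix.ext_iff.mpr h k i
    simp [Eb, Matrix.add_apply, Matrix.smul_apply, h3, Ne.symm h3] at h4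
    first
        | linear_combination h4
        | linear_combination -h4
        | (rcases h4 with hz|hz <;> simp [hz])

include hrefl htrans hA hadd hsmul hjordan hdiag in
theorem invpair {i j : Fin n} (hij : ρ i j) (hji : ρ j i) (hne : i ≠ j) :
    cc ψ i j * cc ψ j i + dd ψ i j * dd ψ j i = 1 := by
  have h := hpol htrans hA hadd hjordan (Eb i j) (memA hA hij) (Eb j i) (memA hA hji)
  have e : (Eb i j : Mat n) * Eb j i + Eb j i * Eb i j = Eb i i + Eb j j := by
    rw [EbMul, EbMul, if_pos rfl, if_pos rfl]
  rw [e, hadd _ (memA hA (hrefl i)) _ (memA hA (hrefl j)), hdiag, hdiag,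
    peirce hrefl htrans hA hadd hsmul hjordan hdiag hij hne,
    peirce hrefl htrans hA hadd hsmul hjordan hdiag hji (Ne.symm hne)] at h
  simp only [add_mul, mul_add, smul_mul_assoc, mul_smul_comm, smul_smul, EbMul,
    if_pos rfl, if_neg hne, if_neg (Ne.symm hne), smul_zero, add_zero, zero_add] at h
  have h2 := Matrix.ext_iff.mpr h i i
  simp [Eb, Matrix.add_apply, Matrix.smul_apply, hne, Ne.symm hne] at h2
  first
      | linear_combination h2
      | linear_combination -h2
      | (rcases h2 with hz|hz <;> simp [hz])

include hrefl htrans hA hadd hsmul hjordan hdiag in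
theorem zig {i j k : Fin n} (hij : ρ i j) (hik : ρ i k) (h1 : i ≠ j) (h2 : i ≠ k)
    (h3 : j ≠ k) :
    dd ψ i j * cc ψ i k = 0 ∧ cc ψ i j * dd ψ i k = 0 := by
  have h := hpol htrans hA hadd hjordan (Eb i j) (memA hA hij) (Eb i k) (memA hA hik)
  have e : (Eb i j : Mat n) * Eb i k + Eb i k * Eb i j = 0 := by
    rw [EbMul, EbMul, if_neg (fun hh => h1 hh.symm), if_neg (fun hh => h2 hh.symm), add_zero]
  rw [e, psi0 hA hsmul, peirce hrefl htrans hA hadd hsmul hjordan hdiag hij h1,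
    peirce hrefl htrans hA hadd hsmul hjordan hdiag hik h2] at h
  simp only [add_mul, mul_add, smul_mul_assoc, mul_smul_comm, smul_smul, EbMul,
    if_pos rfl, if_neg h1, if_neg h2, if_neg h3, if_neg (Ne.symm h1), if_neg (Ne.symm h2),
    if_neg (Ne.symm h3), smul_zero, add_zero, zero_add] at h
  constructor
  · have h4 := Matrix.ext_iff.mpr h j k
    simp [Eb, Matrix.add_apply, Matrix.smul_apply, h3, Ne.symm h3] at h4
    first
        | linear_combination h4
        | linear_combination -h4
        | (rcases h4 with hz|hz <;> simp [hz])
  · have h4 := Matrix.ext_iff.mpr h k j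
    simp [Eb, Matrix.add_apply, Matrix.smul_apply, h3, Ne.symm h3] at h4
    first
        | linear_combination h4
        | linear_combination -h4
        | (rcases h4 with hz|hz <;> simp [hz])

include hrefl htrans hA hadd hsmul hjordan hdiag in
theorem zag {i j k : Fin n} (hij : ρ i j) (hkj : ρ k j) (h1 : i ≠ j) (h2 : k ≠ j)
    (h3 : i ≠ k) :
    cc ψ i j * dd ψ k j = 0 ∧ dd ψ i j * cc ψ k j = 0 := by
  have h := hpol htrans hA hadd hjordan (Eb i j) (memA hA hij) (Eb k j) (memA hA hkj)
  have e : (Eb i j : Mat n) * Eb k j + Eb k j * Eb i j = 0 := by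
    rw [EbMul, EbMul, if_neg (fun hh => h2 hh.symm), if_neg (fun hh => h1 hh.symm), add_zero]
  rw [e, psi0 hA hsmul, peirce hrefl htrans hA hadd hsmul hjordan hdiag hij h1,
    peirce hrefl htrans hA hadd hsmul hjordan hdiag hkj h2] at h
  simp only [add_mul, mul_add, smul_mul_assoc, mul_smul_comm, smul_smul, EbMul,
    if_pos rfl, if_neg h1, if_neg h2, if_neg h3, if_neg (Ne.symm h1), if_neg (Ne.symm h2),
    if_neg (Ne.symm h3), smul_zero, add_zero, zero_add] at h
  constructor
  · have h4 := Matrix.ext_iff.mpr h i k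
    simp [Eb, Matrix.add_apply, Matrix.smul_apply, h3, Ne.symm h3] at h4
    first
        | linear_combination h4
        | linear_combination -h4
        | (rcases h4 with hz|hz <;> simp [hz])
  · have h4 := Matrix.ext_iff.mpr h k i
    simp [Eb, Matrix.add_apply, Matrix.smul_apply, h3, Ne.symm h3] at h4
    first
        | linear_combination h4
        | linear_combination -h4
        | (rcases h4 with hz|hz <;> simp [hz])

include hrefl htrans hA hinj hadd hsmul hjordan hdiag in
theorem opp_edge {i j : Fin n} (hij : ρ i j) (hji : ρ j i) (hne : i ≠ j) :
    (cc ψ i j = 0 ↔ cc ψ j i = 0) := by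
  have hinv := invpair hrefl htrans hA hadd hsmul hjordan hdiag hij hji hne
  have CDij := cd0 hrefl htrans hA hadd hsmul hjordan hdiag hij hne
  have CDji := cd0 hrefl htrans hA hadd hsmul hjordan hdiag hji (Ne.symm hne)
  constructor
  · intro hc
    have hdd : dd ψ i j * dd ψ j i = 1 := by linear_combination hinv - cc ψ j i * hc
    have hd2 : dd ψ j i ≠ 0 := fun h => by
      rw [h, mul_zero] at hdd; exact one_ne_zero hdd.symm
    rcases mul_eq_zero.mp CDji with h | h
    · exact h
    · exact absurd h hd2
  · intro hc
    have hdd : dd ψ i j * dd ψ j i = 1 := by linear_combination hinv - cc ψ i j * hc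
    have hd1 : dd ψ i j ≠ 0 := fun h => by
      rw [h, zero_mul] at hdd; exact one_ne_zero hdd.symm
    rcases mul_eq_zero.mp CDij with h | h
    · exact h
    · exact absurd h hd1

include hrefl htrans hA hinj hadd hsmul hjordan hdiag in
theorem neighbor {i j p q : Fin n} (hij : ρ i j) (hpq : ρ p q) (h1 : i ≠ j) (h2 : p ≠ q)
    (hsh : i = p ∨ i = q ∨ j = p ∨ j = q) : (cc ψ i j = 0 ↔ cc ψ p q = 0) := by
  have CD := fun {a b : Fin n} (hab : ρ a b) (hne : a ≠ b) =>
    cd0 hrefl htrans hA hadd hsmul hjordan hdiag hab hne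
  have DN := fun {a b : Fin n} (hab : ρ a b) (hne : a ≠ b) (hc : cc ψ a b = 0) =>
    cdne hrefl htrans hA hinj hadd hsmul hjordan hdiag hab hne hc
  by_cases e1 : i = p
  · subst e1
    by_cases e2 : j = q
    · subst e2; exact Iff.rfl
    · have hz := zig hrefl htrans hA hadd hsmul hjordan hdiag hij hpq h1 h2 e2
      constructor
      · intro hc
        rcases mul_eq_zero.mp hz.1 with h | h
        · exact absurd h (DN hij h1 hc)
        · exact h
      · intro hc
        rcases mul_eq_zero.mp hz.2 with h | h
        · exact h
        · exact absurd h (DN hpq h2 hc)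
  · by_cases e2 : i = q
    · subst e2
      by_cases e3 : p = j
      · subst e3
        exact opp_edge hrefl htrans hA hinj hadd hsmul hjordan hdiag hij hpq h1
      · -- edges (p,i),(i,j), p ≠ j
        have hpj : ρ p j := htrans _ _ _ hpq hij
        have hch := chain hrefl htrans hA hadd hsmul hjordan hdiag hpq hij h2 h1 e3
        constructor
        · intro hc
          have hcpj : cc ψ p j = 0 := by rw [hch.1, hc, mul_zero]
          have hdpj := DN hpj e3 hcpj
          rw [hch.2] at hdpj
          have hdpi : dd ψ p i ≠ 0 := fun h => hdpj (by rw [h, zero_mul])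
          rcases mul_eq_zero.mp (CD hpq h2) with h | h
          · exact h
          · exact absurd h hdpi
        · intro hc
          have hcpj : cc ψ p j = 0 := by rw [hch.1, hc, zero_mul]
          have hdpj := DN hpj e3 hcpj
          rw [hch.2] at hdpj
          have hdij : dd ψ i j ≠ 0 := fun h => hdpj (by rw [h, mul_zero])
          rcases mul_eq_zero.mp (CD hij h1) with h | h
          · exact h
          · exact absurd h hdij
    · by_cases e3 : j = p
      · subst e3
        have hiq : ρ i q := htrans _ _ _ hij hpq
        have hch := chain hrefl htrans hA hadd hsmul hjordan hdiag hij hpq h1 h2 e2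
        constructor
        · intro hc
          have hciq : cc ψ i q = 0 := by rw [hch.1, hc, zero_mul]
          have hdiq := DN hiq e2 hciq
          rw [hch.2] at hdiq
          have hdjq : dd ψ j q ≠ 0 := fun h => hdiq (by rw [h, mul_zero])
          rcases mul_eq_zero.mp (CD hpq h2) with h | h
          · exact h
          · exact absurd h hdjq
        · intro hc
          have hciq : cc ψ i q = 0 := by rw [hch.1, hc, mul_zero]
          have hdiq := DN hiq e2 hciq
          rw [hch.2] at hdiq
          have hdij : dd ψ i j ≠ 0 := fun h => hdiq (by rw [h, zero_mul])
          rcases mul_eq_zero.mp (CD hij h1) with h | h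
          · exact h
          · exact absurd h hdij
      · by_cases e4 : j = q
        · subst e4
          have hz := zag hrefl htrans hA hadd hsmul hjordan hdiag hij hpq h1 h2 e1
          constructor
          · intro hc
            rcases mul_eq_zero.mp hz.2 with h | h
            · exact absurd h (DN hij h1 hc)
            · exact h
          · intro hc
            rcases mul_eq_zero.mp hz.1 with h | h
            · exact h
            · exact absurd h (DN hpq h2 hc)
        · exact absurd hsh (by tauto)

include hrefl htrans hA hinj hadd hsmul hjordan hdiag in
theorem comp {x y : Fin n} (hxy : ReflTransGen (sg ρ) x y) :
    ∀ {i j p q : Fin n}, ρ i j → ρ p q → i ≠ j → p ≠ q → (x = i ∨ x = j) → (y = p ∨ y = q) →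
    (cc ψ i j = 0 ↔ cc ψ p q = 0) := by
  induction hxy with
  | refl =>
    intro i j p q hij hpq h1 h2 hx hy
    apply neighbor hrefl htrans hA hinj hadd hsmul hjordan hdiag hij hpq h1 h2
    rcases hx with rfl | rfl <;> rcases hy with rfl | rfl <;> tauto
  | @tail b y hxb hby ih =>
    intro i j p q hij hpq h1 h2 hx hy
    by_cases hb : b = y
    · subst hb; exact ih hij hpq h1 h2 hx hy
    · rcases hby with hr | hr
      · exact (ih hij hr h1 hb hx (Or.inl rfl)).trans
          (neighbor hrefl htrans hA hinj hadd hsmul hjordan hdiag hr hpq hb h2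
            (by rcases hy with rfl | rfl <;> tauto))
      · have hb' : y ≠ b := fun h => hb h.symm
        exact (ih hij hr h1 hb' hx (Or.inr rfl)).trans
          (neighbor hrefl htrans hA hinj hadd hsmul hjordan hdiag hr hpq hb' h2
            (by rcases hy with rfl | rfl <;> tauto))

theorem mlt_reach {i j : Fin n} (h : ReflTransGen (sg ρ) i j) :
    mlt ρ ψ i ↔ mlt ρ ψ j := by
  have hsymm : Symmetric (sg ρ) := fun a b hab => Or.symm hab
  constructor
  · intro hm a b hab hne hr
    exact hm a b hab hne (h.trans hr)
  · intro hm a b hab hne hr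
    exact hm a b hab hne (((@ReflTransGen.stdSymm _ (sg ρ) ⟨fun a b h => hsymm h⟩).symm _ _ h).trans hr)

theorem mlt_rho {i j : Fin n} (hij : ρ i j) : mlt ρ ψ i ↔ mlt ρ ψ j :=
  mlt_reach (ReflTransGen.single (Or.inl hij))

theorem c_ne_of_mlt {i j : Fin n} (hij : ρ i j) (hne : i ≠ j) (hm : mlt ρ ψ i) :
    cc ψ i j ≠ 0 :=
  hm i j hij hne ReflTransGen.refl

include hrefl htrans hA hadd hsmul hjordan hdiag in
theorem d_zero_of_mlt {i j : Fin n} (hij : ρ i j) (hne : i ≠ j) (hm : mlt ρ ψ i) :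
    dd ψ i j = 0 := by
  rcases mul_eq_zero.mp (cd0 hrefl htrans hA hadd hsmul hjordan hdiag hij hne) with h | h
  · exact absurd h (c_ne_of_mlt hij hne hm)
  · exact h

include hrefl htrans hA hinj hadd hsmul hjordan hdiag in
theorem c_zero_of_not_mlt {i j : Fin n} (hij : ρ i j) (hne : i ≠ j) (hm : ¬ mlt ρ ψ i) :
    cc ψ i j = 0 := by
  unfold mlt at hm
  push_neg at hm
  obtain ⟨a, b, hab, hne', hreach, hc⟩ := hm
  have hsymm : Symmetric (sg ρ) := fun a b hab => Or.symm hab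
  exact (comp hrefl htrans hA hinj hadd hsmul hjordan hdiag
    ((@ReflTransGen.stdSymm _ (sg ρ) ⟨fun a b h => hsymm h⟩).symm _ _ hreach) hab hij hne' hne (Or.inl rfl) (Or.inl rfl)).mp hc

theorem gg_diag (i : Fin n) : gg ρ ψ i i = 1 := if_pos rfl

theorem gg_mlt {i j : Fin n} (hne : i ≠ j) (hm : mlt ρ ψ i) : gg ρ ψ i j = cc ψ i j := by
  rw [gg, if_neg hne, if_pos hm]

theorem gg_not {i j : Fin n} (hne : i ≠ j) (hm : ¬ mlt ρ ψ i) : gg ρ ψ i j = dd ψ i j := by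
  rw [gg, if_neg hne, if_neg hm]

include hrefl htrans hA hinj hadd hsmul hjordan hdiag in
theorem gg_ne {i j : Fin n} (hij : ρ i j) : gg ρ ψ i j ≠ 0 := by
  by_cases hne : i = j
  · subst hne; rw [gg_diag]; exact one_ne_zero
  · by_cases hm : mlt ρ ψ i
    · rw [gg_mlt hne hm]; exact c_ne_of_mlt hij hne hm
    · rw [gg_not hne hm]
      exact cdne hrefl htrans hA hinj hadd hsmul hjordan hdiag hij hne
        (c_zero_of_not_mlt hrefl htrans hA hinj hadd hsmul hjordan hdiag hij hne hm)

include hrefl htrans hA hinj hadd hsmul hjordan hdiag in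
theorem gg_trans {i j k : Fin n} (hij : ρ i j) (hjk : ρ j k) :
    gg ρ ψ i j * gg ρ ψ j k = gg ρ ψ i k := by
  by_cases e1 : i = j
  · subst e1; rw [gg_diag, one_mul]
  · by_cases e2 : j = k
    · subst e2; rw [gg_diag, mul_one]
    · by_cases e3 : i = k
      · subst e3
        rw [gg_diag]
        have hinv := invpair hrefl htrans hA hadd hsmul hjordan hdiag hij hjk e1
        by_cases hm : mlt ρ ψ i
        · have hmj : mlt ρ ψ j := (mlt_rho hij).mp hm
          rw [gg_mlt e1 hm, gg_mlt e2 hmj]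
          have hd := d_zero_of_mlt hrefl htrans hA hadd hsmul hjordan hdiag hij e1 hm
          linear_combination hinv - dd ψ j i * hd
        · have hmj : ¬ mlt ρ ψ j := fun h => hm ((mlt_rho hij).mpr h)
          rw [gg_not e1 hm, gg_not e2 hmj]
          have hc := c_zero_of_not_mlt hrefl htrans hA hinj hadd hsmul hjordan hdiag hij e1 hm
          linear_combination hinv - cc ψ j i * hc
      · have hch := chain hrefl htrans hA hadd hsmul hjordan hdiag hij hjk e1 e2 e3
        by_cases hm : mlt ρ ψ i
        · have hmj : mlt ρ ψ j := (mlt_rho hij).mp hm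
          rw [gg_mlt e1 hm, gg_mlt e2 hmj, gg_mlt e3 hm, hch.1]
        · have hmj : ¬ mlt ρ ψ j := fun h => hm ((mlt_rho hij).mpr h)
          rw [gg_not e1 hm, gg_not e2 hmj, gg_not e3 hm, hch.2]

include hrefl hA in
theorem PP_mem : PP ρ ψ ∈ A := by
  subst hA
  intro a b hab
  have hne : a ≠ b := fun h => hab (h ▸ hrefl a)
  exact Matrix.diagonal_apply_ne _ hne

theorem PP_idem : PP ρ ψ * PP ρ ψ = PP ρ ψ := by
  rw [PP, diagonal_mul_diagonal]
  apply congrArg Matrix.diagonal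
  funext i
  by_cases h : mlt ρ ψ i <;> simp [h]

include hA in
theorem PP_comm {Y : Mat n} (hY : Y ∈ A) : PP ρ ψ * Y = Y * PP ρ ψ := by
  subst hA
  ext a b
  rw [PP, diagonal_mul, mul_diagonal]
  by_cases hab : ρ a b
  · have : mlt ρ ψ a ↔ mlt ρ ψ b := mlt_rho hab
    by_cases h : mlt ρ ψ a
    · rw [if_pos h, if_pos (this.mp h), one_mul, mul_one]
    · rw [if_neg h, if_neg (fun hh => h (this.mpr hh)), zero_mul, mul_zero]
  · rw [hY a b hab, mul_zero, zero_mul]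

theorem EbT (i j : Fin n) : (Eb i j : Mat n)ᵀ = Eb j i := by
  ext a b
  simp [Eb, Matrix.transpose_apply, Matrix.single, and_comm]

theorem diagMulEb (v : Fin n → ℂ) (i j : Fin n) :
    (diagonal v : Mat n) * Eb i j = v i • Eb i j := by
  ext a b
  rw [diagonal_mul, Matrix.smul_apply]
  by_cases ha : a = i
  · subst ha; rw [smul_eq_mul]
  · have h0 : (Eb i j : Mat n) a b = 0 := by
      simp only [Eb]; exact Matrix.single_apply_of_ne _ _ _ _ _ (by tauto)
    rw [h0, mul_zero, smul_zero]

include hrefl htrans hA hinj hadd hsmul hjordan hdiag in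
theorem unit_formula {i j : Fin n} (hij : ρ i j) :
    ψ (Eb i j) = PP ρ ψ * (gg ρ ψ i j • Eb i j)
      + (1 - PP ρ ψ) * (gg ρ ψ i j • Eb i j)ᵀ := by
  rw [Matrix.transpose_smul, EbT]
  by_cases hne : i = j
  · subst hne
    rw [gg_diag, one_smul, hdiag, sub_mul, one_mul]
    rw [PP, diagMulEb]
    by_cases h : mlt ρ ψ i <;> simp [h]
  · rw [peirce hrefl htrans hA hadd hsmul hjordan hdiag hij hne]
    have hmm : mlt ρ ψ i ↔ mlt ρ ψ j := mlt_rho hij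
    rw [mul_smul_comm, mul_smul_comm, sub_mul, one_mul, PP, diagMulEb, diagMulEb]
    by_cases h : mlt ρ ψ i
    · rw [if_pos h, if_pos (hmm.mp h), gg_mlt hne h,
        d_zero_of_mlt hrefl htrans hA hadd hsmul hjordan hdiag hij hne h]
      simp
    · rw [if_neg h, if_neg (fun hh => h (hmm.mpr hh)), gg_not hne h,
        c_zero_of_not_mlt hrefl htrans hA hinj hadd hsmul hjordan hdiag hij hne h]
      simp

end PsiLemmas

noncomputable def FF (ρ : Fin n → Fin n → Prop) (ψ : Mat n → Mat n) : Mat n →ₗ[ℂ] Mat n where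
  toFun Y := PP ρ ψ * (Matrix.of fun i j => gg ρ ψ i j * Y i j)
    + (1 - PP ρ ψ) * (Matrix.of fun i j => gg ρ ψ i j * Y i j)ᵀ
  map_add' Y Z := by
    have e : (Matrix.of fun i j => gg ρ ψ i j * (Y + Z) i j)
        = (Matrix.of fun i j => gg ρ ψ i j * Y i j)
          + (Matrix.of fun i j => gg ρ ψ i j * Z i j) := by
      ext a b
      simp [Matrix.add_apply, mul_add]
    rw [e, transpose_add, mul_add, mul_add]
    abel
  map_smul' α Y := by
    have e : (Matrix.of fun i j => gg ρ ψ i j * (α • Y) i j)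
        = α • (Matrix.of fun i j => gg ρ ψ i j * Y i j) := by
      ext a b
      simp only [Matrix.of_apply, Matrix.smul_apply, smul_eq_mul]
      ring
    rw [e, transpose_smul, mul_smul_comm, mul_smul_comm, RingHom.id_apply, smul_add]

theorem ofg_Eb (ρ : Fin n → Fin n → Prop) (ψ : Mat n → Mat n) (a b : Fin n) :
    (Matrix.of fun i j => gg ρ ψ i j * (Eb a b : Mat n) i j) = gg ρ ψ a b • Eb a b := by
  ext i j
  simp only [Matrix.of_apply, Matrix.smul_apply, smul_eq_mul]
  by_cases h : a = i ∧ b = j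
  · obtain ⟨rfl, rfl⟩ := h
    rfl
  · have h0 : (Eb a b : Mat n) i j = 0 := by
      simp only [Eb]; exact Matrix.single_apply_of_ne _ _ _ _ _ h
    rw [h0, mul_zero, mul_zero]

theorem FF_Eb (ρ : Fin n → Fin n → Prop) (ψ : Mat n → Mat n) (a b : Fin n) :
    FF ρ ψ (Eb a b) = PP ρ ψ * (gg ρ ψ a b • Eb a b)
      + (1 - PP ρ ψ) * (gg ρ ψ a b • Eb a b)ᵀ := by
  show PP ρ ψ * (Matrix.of fun i j => gg ρ ψ i j * (Eb a b : Mat n) i j)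
      + (1 - PP ρ ψ) * (Matrix.of fun i j => gg ρ ψ i j * (Eb a b : Mat n) i j)ᵀ = _
  rw [ofg_Eb]

section Main

variable {ρ : Fin n → Fin n → Prop} {A : Set (Mat n)} {ψ : Mat n → Mat n}
variable (hrefl : ∀ i, ρ i i) (htrans : ∀ i j k, ρ i j → ρ j k → ρ i k)
variable (hA : A = {X : Mat n | ∀ i j, ¬ ρ i j → X i j = 0})
variable (hinj : Set.InjOn ψ A)
variable (hadd : ∀ X ∈ A, ∀ Y ∈ A, ψ (X + Y) = ψ X + ψ Y)
variable (hsmul : ∀ (α : ℂ), ∀ X ∈ A, ψ (α • X) = α • ψ X)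
variable (hjordan : ∀ X ∈ A, ψ (X * X) = ψ X * ψ X)
variable (hdiag : ∀ i, ψ (Eb i i) = Eb i i)

include hrefl htrans hA hinj hadd hsmul hjordan hdiag in
theorem mainPsi {X : Mat n} (hX : X ∈ A) :
    ψ X = PP ρ ψ * (Matrix.of fun i j => gg ρ ψ i j * X i j)
      + (1 - PP ρ ψ) * (Matrix.of fun i j => gg ρ ψ i j * X i j)ᵀ := by
  have hXe : ∀ i j, ¬ ρ i j → X i j = 0 := by rw [hA] at hX; exact hX
  have hsum : ∀ (s : Finset (Fin n × Fin n)) (f : Fin n × Fin n → Mat n),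
      (∀ p, f p ∈ A) → (∑ p ∈ s, f p) ∈ A ∧ ψ (∑ p ∈ s, f p) = ∑ p ∈ s, ψ (f p) := by
    intro s f hf
    induction s using Finset.induction with
    | empty =>
      constructor
      · simpa using zeroA hA
      · simp [psi0 hA hsmul]
    | @insert a s ha ih =>
      rw [Finset.sum_insert ha, Finset.sum_insert ha]
      exact ⟨addA hA (hf a) ih.1, by rw [hadd _ (hf a) _ ih.1, ih.2]⟩
  set f : Fin n × Fin n → Mat n := fun p => Matrix.single p.1 p.2 (X p.1 p.2) with hf
  have hfsmul : ∀ p : Fin n × Fin n, f p = X p.1 p.2 • Eb p.1 p.2 := by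
    intro p
    rw [hf]
    simp only [Eb, smul_single, smul_eq_mul, mul_one]
  have hfA : ∀ p, f p ∈ A := by
    intro p
    by_cases h : ρ p.1 p.2
    · rw [hfsmul p]
      exact smulA hA (memA hA h)
    · have h0 : X p.1 p.2 = 0 := hXe p.1 p.2 h
      rw [hfsmul p, h0, zero_smul]
      exact zeroA hA
  have hrepr : X = ∑ p : Fin n × Fin n, f p := by
    rw [hf, Fintype.sum_prod_type]
    exact matrix_eq_sum_single X
  obtain ⟨hmem, hpsi⟩ := hsum Finset.univ f hfA
  have step : ψ X = ∑ p : Fin n × Fin n, FF ρ ψ (f p) := by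
    rw [hrepr, hpsi]
    apply Finset.sum_congr rfl
    intro p _
    by_cases h : ρ p.1 p.2
    · rw [hfsmul p, hsmul _ _ (memA hA h), LinearMap.map_smul,
        unit_formula hrefl htrans hA hinj hadd hsmul hjordan hdiag h, FF_Eb]
    · have h0 : X p.1 p.2 = 0 := hXe p.1 p.2 h
      rw [hfsmul p, h0, zero_smul, psi0 hA hsmul, map_zero]
  rw [step, ← map_sum, ← hrepr]
  rfl

end Main


section Sconstruction

variable {ρ : Fin n → Fin n → Prop} {A : Set (Mat n)} {φ : Mat n → Mat n}
variable (hrefl : ∀ i, ρ i i) (htrans : ∀ i j k, ρ i j → ρ j k → ρ i k)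
variable (hA : A = {X : Mat n | ∀ i j, ¬ ρ i j → X i j = 0})
variable (hinj : Set.InjOn φ A)
variable (hadd : ∀ X ∈ A, ∀ Y ∈ A, φ (X + Y) = φ X + φ Y)
variable (hsmul : ∀ (α : ℂ), ∀ X ∈ A, φ (α • X) = α • φ X)
variable (hjordan : ∀ X ∈ A, φ (X * X) = φ X * φ X)

include hrefl htrans hA hinj hadd hsmul hjordan in
theorem exists_S : ∃ S : Mat n, IsUnit S ∧ ∀ i, φ (Eb i i) * S = S * Eb i i := by
  have hidem : ∀ i, φ (Eb i i) * φ (Eb i i) = φ (Eb i i) := by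
    intro i
    have h := hjordan (Eb i i) (memA hA (hrefl i))
    have e : (Eb i i : Mat n) * Eb i i = Eb i i := by rw [EbMul, if_pos rfl]
    rw [e] at h
    exact h.symm
  have horth : ∀ i j, i ≠ j → φ (Eb i i) * φ (Eb j j) = 0 := by
    intro i j hne
    have h := hpol htrans hA hadd hjordan (Eb i i) (memA hA (hrefl i))
      (Eb j j) (memA hA (hrefl j))
    have e : (Eb i i : Mat n) * Eb j j + Eb j j * Eb i i = 0 := by
      rw [EbMul, EbMul, if_neg hne, if_neg (Ne.symm hne), add_zero]
    rw [e, psi0 hA hsmul] at h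
    have h' : φ (Eb i i) * φ (Eb j j) + φ (Eb j j) * φ (Eb i i) = 0 := h.symm
    set a := φ (Eb i i)
    set b := φ (Eb j j)
    have e1 : a * b + a * b * a = 0 := by
      have h2 := congrArg (fun M => a * M) h'
      simp only [mul_add, mul_zero] at h2
      rwa [← mul_assoc, ← mul_assoc, hidem i] at h2
    have e2 : a * b * a + a * b * a = 0 := by
      have h2 := congrArg (fun M => M * a) e1
      simp only [add_mul, zero_mul] at h2
      rwa [mul_assoc (a * b) a a, hidem i] at h2
    have e3 : a * b * a = 0 := by
      have h2 : (2 : ℂ) • (a * b * a) = 0 := by rw [two_smul]; exact e2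
      rcases smul_eq_zero.mp h2 with h3 | h3
      · exact absurd h3 (by norm_num)
      · exact h3
    rw [e3, add_zero] at e1
    exact e1
  have hne0 : ∀ i, φ (Eb i i) ≠ 0 := by
    intro i h
    have h1 := psiInj0 hA hinj hsmul (memA hA (hrefl i)) h
    have h2 := Matrix.ext_iff.mpr h1 i i
    simp [Eb] at h2
  have hw : ∀ i : Fin n, ∃ w : Fin n → ℂ, φ (Eb i i) *ᵥ w ≠ 0 := by
    intro i
    by_contra hcon
    push_neg at hcon
    apply hne0 i
    ext a b
    have h5 := congrFun (hcon (Pi.single b 1)) a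
    simpa using h5
  choose w hwne using hw
  set v : Fin n → Fin n → ℂ := fun i => φ (Eb i i) *ᵥ w i with hv
  have hvP : ∀ i, φ (Eb i i) *ᵥ v i = v i := by
    intro i
    rw [hv]
    dsimp only
    rw [mulVec_mulVec, hidem i]
  have hvO : ∀ i j, i ≠ j → φ (Eb j j) *ᵥ v i = 0 := by
    intro i j hne
    rw [hv]
    dsimp only
    rw [mulVec_mulVec, horth j i (Ne.symm hne), zero_mulVec]
  set S : Mat n := Matrix.of (fun a b => v b a) with hS
  have hPS : ∀ i, φ (Eb i i) * S = S * Eb i i := by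
    intro i
    ext a b
    have hL : (φ (Eb i i) * S) a b = (φ (Eb i i) *ᵥ v b) a := by
      simp [Matrix.mul_apply, Matrix.mulVec, dotProduct, hS]
    by_cases hbi : b = i
    · subst hbi
      rw [hL, hvP b]
      simp [Eb, hS]
    · rw [hL, hvO b i (fun h => hbi h)]
      simp [Eb, Pi.zero_apply, Matrix.mul_single_apply_of_ne _ _ _ _ _ hbi]
  refine ⟨S, ?_, hPS⟩
  rw [← Matrix.mulVec_injective_iff_isUnit]
  have hker : ∀ x, S *ᵥ x = 0 → x = 0 := by
    intro x hx
    funext i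
    have h6 : (S * Eb i i) *ᵥ x = 0 := by
      rw [← hPS i, ← mulVec_mulVec, hx, mulVec_zero]
    obtain ⟨a0, ha0⟩ : ∃ a, v i a ≠ 0 := Function.ne_iff.mp (hwne i)
    have h8 : S a0 i * x i = 0 := by
      have h9 := congrFun h6 a0
      have h10 : ((S * Eb i i) *ᵥ x) a0 = ∑ b, (S * Eb i i) a0 b * x b := rfl
      rw [h10] at h9
      rw [Finset.sum_eq_single i] at h9
      · simpa [Eb] using h9
      · intro b _ hbne
        simp [Eb, Matrix.mul_single_apply_of_ne _ _ _ _ _ hbne]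
      · intro h
        exact absurd (Finset.mem_univ i) h
    have hSa0 : S a0 i = v i a0 := rfl
    rw [hSa0] at h8
    have := mul_eq_zero.mp h8
    rcases this with h | h
    · exact absurd h ha0
    · simpa using h
  intro x y hxy
  have : S *ᵥ (x - y) = 0 := by rw [Matrix.mulVec_sub, hxy, sub_self]
  have := hker _ this
  exact sub_eq_zero.mp this

end Sconstruction

end SMA2aux

open SMA2aux

theorem stmt_2 (n : ℕ) (ρ : Fin n → Fin n → Prop)
    (hrefl : ∀ i, ρ i i) (htrans : ∀ i j k, ρ i j → ρ j k → ρ i k)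
    (A : Set (Matrix (Fin n) (Fin n) ℂ))
    (hA : A = {X : Matrix (Fin n) (Fin n) ℂ | ∀ i j, ¬ ρ i j → X i j = 0})
    (φ : Matrix (Fin n) (Fin n) ℂ → Matrix (Fin n) (Fin n) ℂ)
    (hinj : Set.InjOn φ A)
    (hadd : ∀ X ∈ A, ∀ Y ∈ A, φ (X + Y) = φ X + φ Y)
    (hsmul : ∀ (α : ℂ), ∀ X ∈ A, φ (α • X) = α • φ X)
    (hjordan : ∀ X ∈ A, φ (X * X) = φ X * φ X) :
    ∃ (S P : Matrix (Fin n) (Fin n) ℂ) (g : Fin n → Fin n → ℂ),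
      IsUnit S ∧
      P ∈ A ∧ P * P = P ∧ (∀ Y ∈ A, P * Y = Y * P) ∧
      (∀ i j, ρ i j → g i j ≠ 0) ∧
      (∀ i j k, ρ i j → ρ j k → g i j * g j k = g i k) ∧
      (∀ X ∈ A, φ X =
        S * (P * (Matrix.of fun i j => g i j * X i j)
          + (1 - P) * (Matrix.of fun i j => g i j * X i j)ᵀ) * S⁻¹) := by
  obtain ⟨S, hSu, hPS⟩ := exists_S hrefl htrans hA hinj hadd hsmul hjordan
  have hdet : IsUnit S.det := (Matrix.isUnit_iff_isUnit_det S).mp hSu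
  have hSS : S * S⁻¹ = 1 := Matrix.mul_nonsing_inv S hdet
  have hS'S : S⁻¹ * S = 1 := Matrix.nonsing_inv_mul S hdet
  set ψ : Mat n → Mat n := fun X => S⁻¹ * φ X * S with hψ
  have hrec : ∀ X, φ X = S * ψ X * S⁻¹ := by
    intro X
    rw [hψ]
    dsimp only
    simp only [← mul_assoc]
    rw [hSS, one_mul, mul_assoc, hSS, mul_one]
  have hψinj : Set.InjOn ψ A := by
    intro X hX Y hY h
    apply hinj hX hY
    rw [hrec X, hrec Y, h]
  have hψadd : ∀ X ∈ A, ∀ Y ∈ A, ψ (X + Y) = ψ X + ψ Y := by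
    intro X hX Y hY
    show S⁻¹ * φ (X + Y) * S = _
    rw [hadd X hX Y hY, mul_add, add_mul]
  have hψsmul : ∀ (α : ℂ), ∀ X ∈ A, ψ (α • X) = α • ψ X := by
    intro α X hX
    show S⁻¹ * φ (α • X) * S = _
    rw [hsmul α X hX, mul_smul_comm, smul_mul_assoc]
  have hψjordan : ∀ X ∈ A, ψ (X * X) = ψ X * ψ X := by
    intro X hX
    show S⁻¹ * φ (X * X) * S = _
    rw [hjordan X hX]
    have key : (S⁻¹ * φ X * S) * (S⁻¹ * φ X * S) = S⁻¹ * (φ X * φ X) * S := by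
      calc (S⁻¹ * φ X * S) * (S⁻¹ * φ X * S)
          = S⁻¹ * φ X * (S * S⁻¹) * (φ X * S) := by simp only [mul_assoc]
        _ = S⁻¹ * (φ X * φ X) * S := by
            rw [hSS, mul_one]
            simp only [mul_assoc]
    exact key.symm
  have hψdiag : ∀ i, ψ (Eb i i) = Eb i i := by
    intro i
    show S⁻¹ * φ (Eb i i) * S = _
    rw [mul_assoc, hPS i, ← mul_assoc, hS'S, one_mul]
  refine ⟨S, PP ρ ψ, gg ρ ψ, hSu, PP_mem hrefl hA, PP_idem,
    fun Y hY => PP_comm hA hY,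
    fun i j hij => gg_ne hrefl htrans hA hψinj hψadd hψsmul hψjordan hψdiag hij,
    fun i j k hij hjk => gg_trans hrefl htrans hA hψinj hψadd hψsmul hψjordan hψdiag hij hjk,
    ?_⟩
  intro X hX
  rw [hrec X, mainPsi hrefl htrans hA hψinj hψadd hψsmul hψjordan hψdiag hX]
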